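/- For odd b with b > 1 and (a,b) = 1, ∑_{j=1}^{(b−1)/2} ⌊2aj/b⌋ ≡ ((a|b) − 1)/2 (mod 2), where (a|b) is the Jacobi symbol. -/

import Mathlib

open Finset

-- ZMod 2 helpers
private lemma z2_add_self : ∀ x : ZMod 2, x + x = 0 := by decide
private lemma z2_solve1 : ∀ x y z : ZMod 2, x + y = z → y = z + x := by decide
private lemma z2_solve2 : ∀ x y : ZMod 2, x + y = 1 → x = y + 1 := by decide
private lemma z2_solve3 : ∀ x y : ZMod 2, x + y = 1 → y = x + 1 := by decide
private lemma z2_solve4 : ∀ x y m : ZMod 2, x + (y + m) = 0 → x = m + y := by decide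

private lemma cast_odd_two {b : ℕ} (hb : Odd b) : (b : ZMod 2) = 1 := by
  have : ((b % 2 : ℕ) : ZMod 2) = (b : ZMod 2) := ZMod.natCast_mod b 2
  rw [Nat.odd_iff.mp hb] at this
  simpa using this.symm

private lemma half_eq {b : ℕ} (hb : Odd b) : (b - 1) / 2 = b / 2 := by
  obtain ⟨k, rfl⟩ := hb; omega

private lemma parity_div {b : ℕ} (hb : Odd b) (n : ℕ) :
    ((n / b : ℕ) : ZMod 2) = (n : ZMod 2) + ((n % b : ℕ) : ZMod 2) := by
  have h := congrArg (Nat.cast : ℕ → ZMod 2) (Nat.mod_add_div n b)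
  push_cast at h
  rw [cast_odd_two hb, one_mul] at h
  exact z2_solve1 _ _ _ h

private lemma z2_two (x : ZMod 2) : 2 * x = 0 := by
  have : ∀ y : ZMod 2, 2 * y = 0 := by decide
  exact this x

private lemma two_mul_mod {b s : ℕ} (hb : Odd b) (hs0 : s ≠ 0) (hsb : s < b) :
    ((2 * s % b : ℕ) : ZMod 2) = if s ≤ b / 2 then 0 else 1 := by
  have hbo := Nat.odd_iff.mp hb
  by_cases h : s ≤ b / 2
  · rw [if_pos h, Nat.mod_eq_of_lt (by omega)]
    push_cast
    exact z2_two _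
  · rw [if_neg h]
    have h1 : 2 * s % b = 2 * s - b := by
      rw [Nat.mod_eq_sub_mod (by omega), Nat.mod_eq_of_lt (by omega)]
    rw [h1, Nat.cast_sub (by omega : b ≤ 2 * s), cast_odd_two hb]
    push_cast
    rw [z2_two]
    decide

private lemma mod_ne_zero {a b j : ℕ} (hb1 : 1 < b) (hab : Nat.gcd a b = 1)
    (hj : j ∈ Icc 1 (b / 2)) : a * j % b ≠ 0 := by
  rw [Finset.mem_Icc] at hj
  intro h
  have hdvd : b ∣ a * j := Nat.dvd_of_mod_eq_zero h
  have hbj : b ∣ j := (Nat.Coprime.dvd_of_dvd_mul_left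
    (Nat.coprime_comm.mp hab) hdvd)
  have := Nat.le_of_dvd (by omega) hbj
  omega

/-- The Gauss-count. -/
private def mu (a b : ℕ) : ℕ :=
  ((Icc 1 (b / 2)).filter (fun j => b / 2 < a * j % b)).card

private lemma double_mod {a b j : ℕ} : 2 * a * j % b = 2 * (a * j % b) % b := by
  conv_rhs => rw [Nat.mul_mod, Nat.mod_mod_of_dvd _ dvd_rfl]
  conv_lhs => rw [mul_assoc, Nat.mul_mod]

private lemma sum_S_eq_mu {a b : ℕ} (hb : Odd b) (hb1 : 1 < b)
    (hab : Nat.gcd a b = 1) :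
    ((∑ j ∈ Icc 1 (b / 2), 2 * a * j / b : ℕ) : ZMod 2) = (mu a b : ZMod 2) := by
  rw [Nat.cast_sum]
  have hterm : ∀ j ∈ Icc 1 (b / 2),
      ((2 * a * j / b : ℕ) : ZMod 2) = if b / 2 < a * j % b then 1 else 0 := by
    intro j hj
    rw [parity_div hb]
    have h1 : ((2 * a * j : ℕ) : ZMod 2) = 0 := by
      push_cast; rw [mul_assoc]; exact z2_two _
    rw [h1, zero_add, double_mod,
      two_mul_mod hb (mod_ne_zero hb1 hab hj) (Nat.mod_lt _ (by omega))]
    by_cases hc : a * j % b ≤ b / 2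
    · rw [if_pos hc, if_neg (by omega)]
    · rw [if_neg hc, if_pos (by omega)]
  rw [Finset.sum_congr rfl hterm, Finset.sum_boole]
  rfl

private lemma cast_mod_b {b n : ℕ} : ((n % b : ℕ) : ZMod b) = (n : ZMod b) :=
  ZMod.natCast_mod n b

/-- folding map -/
private def gfold (a b j : ℕ) : ℕ :=
  if a * j % b ≤ b / 2 then a * j % b else b - a * j % b

private lemma gfold_mem {a b : ℕ} (hb : Odd b) (hb1 : 1 < b)
    (hab : Nat.gcd a b = 1) {j : ℕ} (hj : j ∈ Icc 1 (b / 2)) :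
    gfold a b j ∈ Icc 1 (b / 2) := by
  have h0 := mod_ne_zero hb1 hab hj
  have hlt : a * j % b < b := Nat.mod_lt _ (by omega)
  have hbo := Nat.odd_iff.mp hb
  rw [Finset.mem_Icc]
  unfold gfold
  split <;> omega

private lemma cast_inj_of_le {b x y : ℕ} (hb1 : 1 < b) (hx : x ≤ b / 2)
    (hy : y ≤ b / 2) (h : (x : ZMod b) = y) : x = y := by
  haveI : NeZero b := ⟨by omega⟩
  have := congrArg ZMod.val h
  rwa [ZMod.val_natCast_of_lt (by omega), ZMod.val_natCast_of_lt (by omega)] at this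

private lemma gfold_injOn {a b : ℕ} (hb : Odd b) (hb1 : 1 < b)
    (hab : Nat.gcd a b = 1) : Set.InjOn (gfold a b) (Icc 1 (b / 2)) := by
  haveI : NeZero b := ⟨by omega⟩
  have hbo := Nat.odd_iff.mp hb
  intro j hj j' hj' heq
  simp only [Finset.coe_Icc, Set.mem_Icc] at hj hj'
  have hju : IsUnit (a : ZMod b) := (ZMod.isUnit_iff_coprime a b).mpr hab
  have hlt : a * j % b < b := Nat.mod_lt _ (by omega)
  have hlt' : a * j' % b < b := Nat.mod_lt _ (by omega)
  have hcast : ∀ k : ℕ, ((a * k % b : ℕ) : ZMod b) = (a : ZMod b) * k := by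
    intro k; rw [cast_mod_b]; push_cast; ring
  have hkey : a * j % b = a * j' % b ∨ a * j % b + a * j' % b = b := by
    unfold gfold at heq
    split at heq <;> split at heq <;> omega
  rcases hkey with hk | hk
  · have : ((a * j % b : ℕ) : ZMod b) = ((a * j' % b : ℕ) : ZMod b) := by rw [hk]
    rw [hcast, hcast] at this
    have hjj : (j : ZMod b) = (j' : ZMod b) := hju.mul_left_cancel this
    exact cast_inj_of_le hb1 hj.2 hj'.2 hjj
  · exfalso
    have h1 : ((a * j % b + a * j' % b : ℕ) : ZMod b) = ((b : ℕ) : ZMod b) := by rw [hk]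
    rw [ZMod.natCast_self, Nat.cast_add, hcast, hcast] at h1
    have h2 : (a : ZMod b) * ((j : ℕ) + (j' : ℕ) : ℕ) = (a : ZMod b) * 0 := by
      push_cast
      rw [mul_zero, mul_add]
      exact h1
    have h3 : ((j + j' : ℕ) : ZMod b) = 0 := by
      have := hju.mul_left_cancel h2
      simpa using this
    have h4 : b ∣ j + j' := (ZMod.natCast_eq_zero_iff _ _).mp h3
    have := Nat.le_of_dvd (by omega) h4
    omega

private lemma gfold_sum {a b : ℕ} (hb : Odd b) (hb1 : 1 < b)
    (hab : Nat.gcd a b = 1) (g : ℕ → ZMod 2) :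
    ∑ j ∈ Icc 1 (b / 2), g (gfold a b j) = ∑ k ∈ Icc 1 (b / 2), g k := by
  have himg : (Icc 1 (b / 2)).image (gfold a b) = Icc 1 (b / 2) := by
    apply Finset.eq_of_subset_of_card_le
    · intro x hx
      rw [Finset.mem_image] at hx
      obtain ⟨j, hj, rfl⟩ := hx
      exact gfold_mem hb hb1 hab hj
    · rw [Finset.card_image_of_injOn (gfold_injOn hb hb1 hab)]
  conv_rhs => rw [← himg]
  rw [Finset.sum_image (fun x hx y hy h => gfold_injOn hb hb1 hab hx hy h)]

private lemma sum_E_eq_mu {a b : ℕ} (hb : Odd b) (hb1 : 1 < b) (ha : Odd a)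
    (hab : Nat.gcd a b = 1) :
    ((∑ j ∈ Icc 1 (b / 2), a * j / b : ℕ) : ZMod 2) = (mu a b : ZMod 2) := by
  rw [Nat.cast_sum]
  have hterm : ∀ j ∈ Icc 1 (b / 2),
      ((a * j / b : ℕ) : ZMod 2) =
        ((j : ZMod 2) + (gfold a b j : ZMod 2)) + if b / 2 < a * j % b then 1 else 0 := by
    intro j hj
    rw [parity_div hb]
    have h1 : ((a * j : ℕ) : ZMod 2) = (j : ZMod 2) := by
      push_cast; rw [cast_odd_two ha, one_mul]
    have h0 := mod_ne_zero hb1 hab hj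
    have hlt : a * j % b < b := Nat.mod_lt _ (by omega)
    have h2 : ((a * j % b : ℕ) : ZMod 2) =
        (gfold a b j : ZMod 2) + if b / 2 < a * j % b then 1 else 0 := by
      unfold gfold
      by_cases hc : a * j % b ≤ b / 2
      · rw [if_pos hc, if_neg (by omega), add_zero]
      · rw [if_neg hc, if_pos (by omega)]
        have hsum : (b - a * j % b) + (a * j % b) = b := by omega
        have hz := congrArg (Nat.cast : ℕ → ZMod 2) hsum
        push_cast at hz
        rw [cast_odd_two hb] at hz
        exact z2_solve3 _ _ hz
    rw [h1, h2, add_assoc]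
  rw [Finset.sum_congr rfl hterm, Finset.sum_add_distrib, Finset.sum_add_distrib,
    Finset.sum_boole, gfold_sum hb hb1 hab (fun k => (k : ZMod 2))]
  have hzz : ∑ j ∈ Icc 1 (b / 2), (j : ZMod 2) + ∑ k ∈ Icc 1 (b / 2), (k : ZMod 2) = 0 :=
    z2_add_self _
  rw [hzz, zero_add]
  rfl

open Nat in
private theorem sum_Ico_eq_card_lt' {p q : ℕ} :
    ∑ a ∈ Ico 1 (p / 2).succ, a * q / p =
      ((Ico 1 (p / 2).succ ×ˢ Ico 1 (q / 2).succ).filter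
        (fun x : ℕ × ℕ => x.2 * p ≤ x.1 * q)).card :=
  if hp0 : p = 0 then by simp [hp0, Finset.ext_iff]
  else
    calc
      ∑ a ∈ Ico 1 (p / 2).succ, a * q / p =
          ∑ a ∈ Ico 1 (p / 2).succ,
            ((Ico 1 (q / 2).succ).filter (fun x => x * p ≤ a * q)).card :=
        Finset.sum_congr rfl fun x hx =>
          ZMod.div_eq_filter_card (Nat.pos_of_ne_zero hp0) <|
            calc
              x * q / p ≤ p / 2 * q / p := by
                have := Nat.le_of_lt_succ (Finset.mem_Ico.mp hx).2; gcongr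
              _ ≤ _ := Nat.div_mul_div_le_div _ _ _
      _ = _ := by
        rw [← Finset.card_sigma]
        exact Finset.card_nbij' (fun a => ⟨a.1, a.2⟩) (fun a => ⟨a.1, a.2⟩)
          (by simp +contextual only [Set.MapsTo, Finset.mem_coe, Finset.mem_filter, Finset.mem_sigma, and_self_iff,
            forall_true_iff, Finset.mem_product])
          (by simp +contextual only [Set.MapsTo, Finset.mem_coe, Finset.mem_filter, Finset.mem_sigma, and_self_iff,
            forall_true_iff, Finset.mem_product]) (fun _ _ => rfl) (fun _ _ => rfl)

private theorem eisen_rec {p q : ℕ} (hp0 : 0 < p) (hq0 : 0 < q) (hpq : Nat.Coprime p q) :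
    ∑ a ∈ Ico 1 (p / 2).succ, a * q / p + ∑ a ∈ Ico 1 (q / 2).succ, a * p / q =
      p / 2 * (q / 2) := by
  have hswap :
      ((Ico 1 (q / 2).succ ×ˢ Ico 1 (p / 2).succ).filter
        (fun x : ℕ × ℕ => x.2 * q ≤ x.1 * p)).card =
      ((Ico 1 (p / 2).succ ×ˢ Ico 1 (q / 2).succ).filter
        (fun x : ℕ × ℕ => x.1 * q ≤ x.2 * p)).card :=
    Finset.card_equiv (Equiv.prodComm _ _)
      (fun ⟨_, _⟩ => by
        simp +contextual only [Finset.mem_filter, and_self_iff, Prod.swap_prod_mk,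
          forall_true_iff, Finset.mem_product, Equiv.prodComm_apply, and_assoc, and_left_comm])
  have hdisj :
      Disjoint
        ((Ico 1 (p / 2).succ ×ˢ Ico 1 (q / 2).succ).filter
          (fun x : ℕ × ℕ => x.2 * p ≤ x.1 * q))
        ((Ico 1 (p / 2).succ ×ˢ Ico 1 (q / 2).succ).filter
          (fun x : ℕ × ℕ => x.1 * q ≤ x.2 * p)) := by
    apply Finset.disjoint_filter.2 fun x hx hpq1 hqp1 => ?_
    have hmem := Finset.mem_product.mp hx
    have h1 : 1 ≤ x.1 := (Finset.mem_Ico.mp hmem.1).1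
    have h2 : x.1 ≤ p / 2 := Nat.le_of_lt_succ (Finset.mem_Ico.mp hmem.1).2
    have heq : x.2 * p = x.1 * q := le_antisymm hpq1 hqp1
    have hdvd : p ∣ x.1 * q := ⟨x.2, by rw [← heq]; ring⟩
    have hpx : p ∣ x.1 := Nat.Coprime.dvd_of_dvd_mul_right hpq hdvd
    have hle := Nat.le_of_dvd (by omega) hpx
    have hlt : p / 2 < p := Nat.div_lt_self hp0 (by norm_num)
    omega
  have hunion :
      ((Ico 1 (p / 2).succ ×ˢ Ico 1 (q / 2).succ).filter
          (fun x : ℕ × ℕ => x.2 * p ≤ x.1 * q)) ∪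
        ((Ico 1 (p / 2).succ ×ˢ Ico 1 (q / 2).succ).filter
          (fun x : ℕ × ℕ => x.1 * q ≤ x.2 * p)) =
      Ico 1 (p / 2).succ ×ˢ Ico 1 (q / 2).succ :=
    Finset.ext fun x => by
      have := le_total (x.2 * p) (x.1 * q)
      simp only [Finset.mem_union, Finset.mem_filter, Finset.mem_Ico, Finset.mem_product]
      tauto
  rw [sum_Ico_eq_card_lt', sum_Ico_eq_card_lt', hswap, ← Finset.card_union_of_disjoint hdisj,
    hunion, Finset.card_product]
  simp only [Nat.card_Ico, Nat.succ_sub_succ_eq_sub, Nat.sub_zero]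

private theorem eisen_rec' {p q : ℕ} (hp0 : 0 < p) (hq0 : 0 < q) (hpq : Nat.Coprime p q) :
    ∑ j ∈ Icc 1 (q / 2), p * j / q + ∑ j ∈ Icc 1 (p / 2), q * j / p =
      p / 2 * (q / 2) := by
  have h := eisen_rec hp0 hq0 hpq
  rw [Nat.succ_eq_add_one, Nat.succ_eq_add_one, Finset.Ico_add_one_right_eq_Icc,
    Finset.Ico_add_one_right_eq_Icc] at h
  rw [show (∑ j ∈ Icc 1 (q / 2), p * j / q) = ∑ j ∈ Icc 1 (q / 2), j * p / q from
      Finset.sum_congr rfl (fun j _ => by rw [mul_comm p j]),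
    show (∑ j ∈ Icc 1 (p / 2), q * j / p) = ∑ j ∈ Icc 1 (p / 2), j * q / p from
      Finset.sum_congr rfl (fun j _ => by rw [mul_comm q j])]
  omega

private lemma refl_term {a b j : ℕ} (hb : Odd b) (hb1 : 1 < b) (ha0 : 0 < a)
    (hab2 : a < b) (hab : Nat.gcd a b = 1) (hj : j ∈ Icc 1 (b / 2)) :
    2 * (b - a) * j / b + (2 * a * j / b + 1) = 2 * j := by
  have hj' := Finset.mem_Icc.mp hj
  obtain ⟨c, rfl⟩ : ∃ c, b = a + c := ⟨b - a, by omega⟩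
  set b := a + c with hbdef
  have hc0 : 0 < c := by omega
  have hba : b - a = c := by omega
  set q := 2 * a * j / b with hq
  set r := 2 * a * j % b with hr
  have e2 : b * q + r = 2 * a * j := Nat.div_add_mod _ _
  have e3 : r < b := Nat.mod_lt _ (by omega)
  have e4 : 0 < r := by
    rcases Nat.eq_zero_or_pos r with h0 | h
    · exfalso
      have hdvd : b ∣ 2 * (a * j) := by
        rw [← mul_assoc]; exact Nat.dvd_of_mod_eq_zero h0
      have hb2 : Nat.Coprime b 2 := Nat.coprime_two_right.mpr hb
      have hdvd2 := Nat.Coprime.dvd_of_dvd_mul_left hb2 hdvd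
      exact mod_ne_zero hb1 hab hj (Nat.dvd_iff_mod_eq_zero.mp hdvd2)
    · exact h
  have e5 : q + 1 ≤ 2 * j := by
    have h1 : q * b ≤ 2 * a * j := Nat.div_mul_le_self _ _
    have h2 : 2 * a * j < 2 * j * b := by
      have : 2 * a < 2 * b := by omega
      calc 2 * a * j < 2 * b * j := by
            exact Nat.mul_lt_mul_of_lt_of_le this (le_refl j) (by omega)
        _ = 2 * j * b := by ring
    have := lt_of_le_of_lt h1 h2
    exact Nat.lt_of_mul_lt_mul_right this
  set t := 2 * j - q - 1 with htdef
  have ht : t + q + 1 = 2 * j := by omega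
  have e1 : 2 * c * j + 2 * a * j = 2 * j * b := by rw [hbdef]; ring
  have e6 : 2 * c * j + (b * q + r) = (t + q + 1) * b := by
    rw [e2, ht]
    linarith [e1]
  have e7 : (t + q + 1) * b = t * b + q * b + b := by ring
  have e8 : 2 * c * j = b * t + (b - r) := by
    have hbq : b * q = q * b := by ring
    have hbt : b * t = t * b := by ring
    omega
  rw [hba, e8, Nat.mul_add_div (by omega), Nat.div_eq_of_lt (by omega), add_zero]
  omega

private lemma sum_refl {a b : ℕ} (hb : Odd b) (hb1 : 1 < b) (ha0 : 0 < a)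
    (hab2 : a < b) (hab : Nat.gcd a b = 1) :
    ((∑ j ∈ Icc 1 (b / 2), 2 * (b - a) * j / b : ℕ) : ZMod 2) =
      ((b / 2 : ℕ) : ZMod 2) + ((∑ j ∈ Icc 1 (b / 2), 2 * a * j / b : ℕ) : ZMod 2) := by
  have h1 : (∑ j ∈ Icc 1 (b / 2), (2 * (b - a) * j / b + (2 * a * j / b + 1)))
      = ∑ j ∈ Icc 1 (b / 2), 2 * j :=
    Finset.sum_congr rfl (fun j hj => refl_term hb hb1 ha0 hab2 hab hj)
  simp only [Finset.sum_add_distrib, Finset.sum_const, Nat.card_Icc, smul_eq_mul,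
    mul_one] at h1
  have hsum : (∑ j ∈ Icc 1 (b / 2), 2 * (b - a) * j / b) +
      ((∑ j ∈ Icc 1 (b / 2), 2 * a * j / b) + b / 2) = ∑ j ∈ Icc 1 (b / 2), 2 * j := by
    omega
  have hz := congrArg (Nat.cast : ℕ → ZMod 2) hsum
  rw [Nat.cast_add, Nat.cast_add] at hz
  have hzero : ((∑ j ∈ Icc 1 (b / 2), 2 * j : ℕ) : ZMod 2) = 0 := by
    rw [Nat.cast_sum]
    apply Finset.sum_eq_zero
    intro j _
    push_cast
    exact z2_two _
  rw [hzero] at hz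
  exact z2_solve4 _ _ _ hz

private lemma z2_solve5 : ∀ x y z : ZMod 2, x + y = z → x = z + y := by decide
private lemma z2_solve6 : ∀ x m y : ZMod 2, x = m + y → y = m + x := by decide

private lemma neg_one_pow_congr' {x y : ℕ} (h : (x : ZMod 2) = (y : ZMod 2)) :
    (-1 : ℤ) ^ x = (-1 : ℤ) ^ y := by
  rw [neg_one_pow_eq_pow_mod_two, neg_one_pow_eq_pow_mod_two (n := y)]
  congr 1
  exact (ZMod.natCast_eq_natCast_iff x y 2).mp h

private lemma jac_reduce {a b : ℕ} : jacobiSym (a % b : ℕ) b = jacobiSym a b := by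
  have h : ((a % b : ℕ) : ℤ) = (a : ℤ) % (b : ℕ) := by push_cast; rfl
  rw [h, ← jacobiSym.mod_left]

private lemma jac_reflect {a b : ℕ} (hb : Odd b) (h : a < b) :
    jacobiSym a b = (-1 : ℤ) ^ (b / 2) * jacobiSym (b - a : ℕ) b := by
  have h1 : ((a : ℤ)) % b = (-((b - a : ℕ) : ℤ)) % b := by
    rw [Nat.cast_sub h.le]
    rw [show -(((b : ℕ) : ℤ) - a) = a - b by ring, Int.sub_emod_right]

  rw [jacobiSym.mod_left' h1, neg_eq_neg_one_mul, jacobiSym.mul_left,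
    jacobiSym.at_neg_one hb, ZMod.χ₄_eq_neg_one_pow (Nat.odd_iff.mp hb)]

private lemma mu_mod {a b : ℕ} : mu (a % b) b = mu a b := by
  unfold mu
  congr 1
  apply Finset.filter_congr
  intro j _
  rw [Nat.mod_mul_mod]

private lemma key (b : ℕ) : Odd b → 1 < b → ∀ a : ℕ, 0 < a → Nat.gcd a b = 1 →
    (-1 : ℤ) ^ (∑ j ∈ Icc 1 (b / 2), 2 * a * j / b) = jacobiSym a b := by
  induction b using Nat.strong_induction_on with
  | _ b IH =>
  intro hb hb1 a ha0 hab
  have inner : ∀ c : ℕ, Odd c → 0 < c → c < b → Nat.gcd c b = 1 →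
      (-1 : ℤ) ^ (∑ j ∈ Icc 1 (b / 2), 2 * c * j / b) = jacobiSym c b := by
    intro c hc hc0 hcb hcb1
    by_cases hc1 : c = 1
    · subst hc1
      have hbo := Nat.odd_iff.mp hb
      have hz : ∀ j ∈ Icc 1 (b / 2), 2 * 1 * j / b = 0 := fun j hj =>
        Nat.div_eq_of_lt (by have := (Finset.mem_Icc.mp hj).2; omega)
      rw [Finset.sum_eq_zero hz, pow_zero]
      simp [jacobiSym.one_left]
    · have hc1' : 1 < c := by omega
      have hgcd_bc : Nat.gcd b c = 1 := Nat.coprime_comm.mp hcb1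
      have hS := sum_S_eq_mu hb hb1 hcb1
      have hE := sum_E_eq_mu hb hb1 hc hcb1
      have hS' := sum_S_eq_mu hc hc1' hgcd_bc
      have hE' := sum_E_eq_mu hc hc1' hb hgcd_bc
      have hErec := eisen_rec' (p := c) (q := b) hc0 (by omega) hcb1
      have hpar : ((∑ j ∈ Icc 1 (b / 2), 2 * c * j / b : ℕ) : ZMod 2) =
          ((c / 2 * (b / 2) + ∑ j ∈ Icc 1 (c / 2), 2 * b * j / c : ℕ) : ZMod 2) := by
        have hcast := congrArg (Nat.cast : ℕ → ZMod 2) hErec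
        rw [Nat.cast_add, hE, hE'] at hcast
        rw [Nat.cast_add, hS, hS']
        exact z2_solve5 _ _ _ hcast
      rw [neg_one_pow_congr' hpar, pow_add,
        IH c hcb hc hc1' b (by omega) hgcd_bc,
        jacobiSym.quadratic_reciprocity hc hb]
  -- reduce a mod b
  have hr1 : 0 < a % b := by
    rcases Nat.eq_zero_or_pos (a % b) with h0 | h
    · exfalso
      have : b ∣ a := Nat.dvd_of_mod_eq_zero h0
      have := Nat.le_of_dvd ha0 this
      have h2 : Nat.gcd a b = b := Nat.gcd_eq_right (Nat.dvd_of_mod_eq_zero h0)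
      omega
    · exact h
  have hr2 : a % b < b := Nat.mod_lt _ (by omega)
  have hgcdr : Nat.gcd (a % b) b = 1 := by
    have h1 : Nat.gcd b a = Nat.gcd (a % b) b := Nat.gcd_rec b a
    have h2 : Nat.gcd a b = Nat.gcd b a := Nat.gcd_comm a b
    omega
  have hjr : jacobiSym ((a % b : ℕ) : ℤ) b = jacobiSym a b := jac_reduce
  have hsr : ((∑ j ∈ Icc 1 (b / 2), 2 * a * j / b : ℕ) : ZMod 2) =
      ((∑ j ∈ Icc 1 (b / 2), 2 * (a % b) * j / b : ℕ) : ZMod 2) := by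
    rw [sum_S_eq_mu hb hb1 hab, sum_S_eq_mu hb hb1 hgcdr, mu_mod]
  rcases Nat.even_or_odd (a % b) with hev | hod
  · set r := a % b with hrdef
    set c := b - r with hcdef
    have hcodd : Odd c := Nat.Odd.sub_even (by omega) hb hev
    have hgcdc : Nat.gcd c b = 1 := by
      have hd1 : Nat.gcd c b ∣ r := by
        have h1 : Nat.gcd c b ∣ b := Nat.gcd_dvd_right _ _
        have h2 : Nat.gcd c b ∣ c := Nat.gcd_dvd_left _ _
        have h3 := Nat.dvd_sub h1 h2
        rwa [show b - c = r by omega] at h3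
      have h4 : Nat.gcd c b ∣ Nat.gcd r b := Nat.dvd_gcd hd1 (Nat.gcd_dvd_right _ _)
      rw [hgcdr] at h4
      exact Nat.dvd_one.mp h4
    have hrefl := sum_refl hb hb1 hr1 hr2 hgcdr
    -- hrefl : cast S(c) = cast(b/2) + cast S(r)
    have hflip : ((∑ j ∈ Icc 1 (b / 2), 2 * r * j / b : ℕ) : ZMod 2) =
        ((b / 2 + ∑ j ∈ Icc 1 (b / 2), 2 * c * j / b : ℕ) : ZMod 2) := by
      rw [Nat.cast_add]
      exact z2_solve6 _ _ _ hrefl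
    calc (-1 : ℤ) ^ (∑ j ∈ Icc 1 (b / 2), 2 * a * j / b)
        = (-1 : ℤ) ^ (∑ j ∈ Icc 1 (b / 2), 2 * r * j / b) := neg_one_pow_congr' hsr
      _ = (-1 : ℤ) ^ (b / 2 + ∑ j ∈ Icc 1 (b / 2), 2 * c * j / b) :=
          neg_one_pow_congr' hflip
      _ = (-1 : ℤ) ^ (b / 2) * (-1 : ℤ) ^ (∑ j ∈ Icc 1 (b / 2), 2 * c * j / b) :=
          pow_add _ _ _
      _ = (-1 : ℤ) ^ (b / 2) * jacobiSym c b := by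
          rw [inner c hcodd (by omega) (by omega) hgcdc]
      _ = jacobiSym r b := (jac_reflect hb hr2).symm
      _ = jacobiSym a b := hjr
  · calc (-1 : ℤ) ^ (∑ j ∈ Icc 1 (b / 2), 2 * a * j / b)
        = (-1 : ℤ) ^ (∑ j ∈ Icc 1 (b / 2), 2 * (a % b) * j / b) := neg_one_pow_congr' hsr
      _ = jacobiSym (a % b : ℕ) b := inner (a % b) hod hr1 hr2 hgcdr
      _ = jacobiSym a b := hjr

theorem floor_double_sum_jacobi (a b : ℕ) (hb : Odd b) (hb1 : 1 < b)
    (hab : Nat.gcd a b = 1) :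
    ((∑ j ∈ Finset.Icc 1 ((b - 1) / 2), 2 * a * j / b : ℕ) : ℤ)
      ≡ (jacobiSym a b - 1) / 2 [ZMOD 2] := by
  have ha0 : 0 < a := by
    rcases Nat.eq_zero_or_pos a with h0 | h
    · subst h0; simp [Nat.gcd] at hab; omega
    · exact h
  rw [half_eq hb]
  have hkey := key b hb hb1 a ha0 hab
  set S := ∑ j ∈ Icc 1 (b / 2), 2 * a * j / b with hSdef
  have hgcd : Int.gcd (a : ℤ) b = 1 := by
    rw [Int.gcd_natCast_natCast]; exact hab
  rcases jacobiSym.eq_one_or_neg_one hgcd with hJ | hJ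
  · rw [hJ]
    norm_num
    rw [hJ] at hkey
    have hev : Even S := by
      by_contra hodd
      rw [Odd.neg_one_pow (Nat.not_even_iff_odd.mp hodd)] at hkey
      norm_num at hkey
    obtain ⟨k, hk⟩ := hev
    rw [hk]
    show ((k + k : ℕ) : ℤ) % 2 = 0 % 2
    push_cast
    omega
  · rw [hJ]
    norm_num
    rw [hJ] at hkey
    have hodd : Odd S := by
      by_contra hev
      rw [Even.neg_one_pow (Nat.not_odd_iff_even.mp hev)] at hkey
      norm_num at hkey
    obtain ⟨k, hk⟩ := hodd
    rw [hk]
    show ((2 * k + 1 : ℕ) : ℤ) % 2 = (-1) % 2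
    push_cast
    omega
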